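/- Let K be the simplicial complex on {1,…,8} from Construction 3.1 and let I ⊆ {1,…,8} with |I| = 2. Then the full subcomplex K_I is disconnected (equivalently H̃⁰(K_I; ℤ) ≠ 0) if and only if I = {5,6} or I = {7,8}. -/

import Mathlib

namespace Paper

/-- A finite abstract simplicial complex on an ambient type `V`, with a specified
vertex set, containing the empty face and closed under passing to subsets. -/
structure SComplex (V : Type*) where
  vertexSet : Finset V
  faces : Set (Finset V)
  empty_mem : ∅ ∈ faces
  face_sub : ∀ {s : Finset V}, s ∈ faces → s ⊆ vertexSet
  down_closed : ∀ {s t : Finset V}, s ∈ faces → t ⊆ s → t ∈ faces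

namespace SComplex

variable {V : Type*}

/-- The set of missing faces (minimal non-faces) of `K`. -/
def MF (K : SComplex V) : Set (Finset V) :=
  {σ | σ ⊆ K.vertexSet ∧ σ ∉ K.faces ∧ ∀ t ⊂ σ, t ∈ K.faces}

/-- The full subcomplex on a vertex subset `I`. -/
def full (K : SComplex V) (I : Finset V) : SComplex V where
  vertexSet := I
  faces := {s | s ∈ K.faces ∧ s ⊆ I}
  empty_mem := ⟨K.empty_mem, Finset.empty_subset I⟩
  face_sub := fun hs => hs.2
  down_closed := fun hs hts => ⟨K.down_closed hs.1 hts, hts.trans hs.2⟩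

/-- The full simplex on a vertex set `W`. -/
def fullSimplex (W : Finset V) : SComplex V where
  vertexSet := W
  faces := {s | s ⊆ W}
  empty_mem := Finset.empty_subset W
  face_sub := fun hs => hs
  down_closed := fun hs hts => hts.trans hs

/-- The join of two simplicial complexes (on disjoint vertex sets). -/
def join [DecidableEq V] (K L : SComplex V) : SComplex V where
  vertexSet := K.vertexSet ∪ L.vertexSet
  faces := {s | ∃ a ∈ K.faces, ∃ b ∈ L.faces, s = a ∪ b}
  empty_mem := ⟨∅, K.empty_mem, ∅, L.empty_mem, by rw [Finset.union_empty]⟩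
  face_sub := by
    rintro s ⟨a, ha, b, hb, rfl⟩
    exact Finset.union_subset_union (K.face_sub ha) (L.face_sub hb)
  down_closed := by
    rintro s t ⟨a, ha, b, hb, rfl⟩ hts
    refine ⟨t ∩ a, K.down_closed ha Finset.inter_subset_right,
      t ∩ b, L.down_closed hb Finset.inter_subset_right, ?_⟩
    ext x
    simp only [Finset.mem_union, Finset.mem_inter]
    constructor
    · intro hx
      rcases Finset.mem_union.1 (hts hx) with h | h
      · exact Or.inl ⟨hx, h⟩
      · exact Or.inr ⟨hx, h⟩
    · rintro (⟨h, _⟩ | ⟨h, _⟩) <;> exact h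

/-- The join of a finite family of simplicial complexes (on pairwise disjoint
vertex sets). -/
def multiJoin {ι : Type*} [Fintype ι] [DecidableEq V] (K : ι → SComplex V) : SComplex V where
  vertexSet := Finset.univ.sup fun i => (K i).vertexSet
  faces := {s | ∃ t : ι → Finset V, (∀ i, t i ∈ (K i).faces) ∧ s = Finset.univ.sup t}
  empty_mem := ⟨fun _ => ∅, fun i => (K i).empty_mem, by ext x; simp [Finset.mem_sup]⟩
  face_sub := by
    rintro s ⟨t, ht, rfl⟩
    exact Finset.sup_mono_fun fun i _ => (K i).face_sub (ht i)
  down_closed := by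
    rintro s u ⟨t, ht, rfl⟩ hus
    refine ⟨fun i => u ∩ t i, fun i => (K i).down_closed (ht i) Finset.inter_subset_right, ?_⟩
    ext x
    simp only [Finset.mem_sup, Finset.mem_inter]
    constructor
    · intro hx
      rcases Finset.mem_sup.1 (hus hx) with ⟨i, hi, hxi⟩
      exact ⟨i, hi, hx, hxi⟩
    · rintro ⟨i, _, hx, _⟩
      exact hx

/-- The geometric realization of `K`, as a subspace of `V → ℝ`. -/
def realization (K : SComplex V) : Set (V → ℝ) :=
  {f | (∀ v, 0 ≤ f v) ∧ ∃ s ∈ K.faces, (∀ v ∉ s, f v = 0) ∧ ∑ v ∈ s, f v = 1}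

/-- `Γ_I` is (isomorphic to) the boundary of a polygon on the vertex set `I`. -/
def IsPolygonBoundary [DecidableEq V] (K : SComplex V) (I : Finset V) : Prop :=
  3 ≤ I.card ∧ ∃ e : Fin I.card → V, Function.Injective e ∧ (∀ i, e i ∈ I) ∧
    ∀ s : Finset V, s ∈ (K.full I).faces ↔
      s = ∅ ∨ (∃ i, s = {e i}) ∨
        ∃ i : Fin I.card, s = {e i, e ⟨(i.1 + 1) % I.card, Nat.mod_lt _ i.pos⟩}

/-! ### Reduced simplicial chains, homology and cohomology -/

/-- The group of reduced simplicial `n`-chains: the free abelian group on the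
faces of `K` with `n + 1` vertices (`n : ℤ`; `n = -1` corresponds to the empty face). -/
abbrev chainZ (K : SComplex V) (n : ℤ) : Type _ :=
  {σ : Finset V // σ ∈ K.faces ∧ (σ.card : ℤ) = n + 1} →₀ ℤ

/-- Transporting chain groups along an equality of degrees. -/
noncomputable def chainCast (K : SComplex V) {a b : ℤ} (h : a = b) :
    K.chainZ a ≃ₗ[ℤ] K.chainZ b := by subst h; exact LinearEquiv.refl ℤ _

variable [DecidableEq V] [LinearOrder V]

/-- The boundary of a basis chain. -/
noncomputable def bdryElem (K : SComplex V) (n : ℤ)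
    (σ : {σ : Finset V // σ ∈ K.faces ∧ (σ.card : ℤ) = n + 1}) : K.chainZ (n - 1) :=
  ∑ i : Fin σ.1.card,
    ((-1 : ℤ) ^ (i : ℕ)) •
      Finsupp.single
        ⟨σ.1.erase ((σ.1.sort (· ≤ ·)).get (Fin.cast (Finset.length_sort (· ≤ ·)).symm i)), by
          refine ⟨K.down_closed σ.2.1 (Finset.erase_subset _ _), ?_⟩
          have hm : (σ.1.sort (· ≤ ·)).get (Fin.cast (Finset.length_sort (· ≤ ·)).symm i) ∈ σ.1 :=
            (Finset.mem_sort (· ≤ ·)).1 (List.get_mem _ _)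
          rw [Finset.card_erase_of_mem hm]
          have h1 : 0 < σ.1.card := i.pos
          have h2 := σ.2.2
          omega⟩ 1

/-- The simplicial boundary operator on reduced chains. -/
noncomputable def bdry (K : SComplex V) (n : ℤ) : K.chainZ n →ₗ[ℤ] K.chainZ (n - 1) :=
  Finsupp.lsum ℤ fun σ => LinearMap.toSpanSingleton ℤ _ (K.bdryElem n σ)

/-- Reduced `n`-cycles. -/
noncomputable def cycles (K : SComplex V) (n : ℤ) : Submodule ℤ (K.chainZ n) :=
  LinearMap.ker (K.bdry n)

/-- Reduced `n`-boundaries. -/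
noncomputable def bdries (K : SComplex V) (n : ℤ) : Submodule ℤ (K.chainZ n) :=
  (LinearMap.range (K.bdry (n + 1))).map (K.chainCast (by ring)).toLinearMap

/-- The `n`-th reduced simplicial homology group of `K` with `ℤ` coefficients. -/
noncomputable abbrev reducedHomology (K : SComplex V) (n : ℤ) :=
  K.cycles n ⧸ Submodule.comap (K.cycles n).subtype (K.bdries n ⊓ K.cycles n)

/-- The simplicial coboundary operator on reduced cochains. -/
noncomputable def cobdry (K : SComplex V) (n : ℤ) :
    (K.chainZ n →ₗ[ℤ] ℤ) →ₗ[ℤ] (K.chainZ (n + 1) →ₗ[ℤ] ℤ) :=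
  LinearMap.lcomp ℤ ℤ ((K.chainCast (show n + 1 - 1 = n by ring)).toLinearMap.comp (K.bdry (n + 1)))

/-- Reduced `n`-cocycles. -/
noncomputable def cocycles (K : SComplex V) (n : ℤ) : Submodule ℤ (K.chainZ n →ₗ[ℤ] ℤ) :=
  LinearMap.ker (K.cobdry n)

/-- Reduced `n`-coboundaries. -/
noncomputable def cobdries (K : SComplex V) (n : ℤ) : Submodule ℤ (K.chainZ n →ₗ[ℤ] ℤ) :=
  (LinearMap.range (K.cobdry (n - 1))).map
    ((LinearEquiv.arrowCongr (K.chainCast (show n - 1 + 1 = n by ring))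
      (LinearEquiv.refl ℤ ℤ)).toLinearMap)

/-- The `n`-th reduced simplicial cohomology group of `K` with `ℤ` coefficients. -/
noncomputable abbrev reducedCohomology (K : SComplex V) (n : ℤ) :=
  K.cocycles n ⧸ Submodule.comap (K.cocycles n).subtype (K.cobdries n ⊓ K.cocycles n)

/-- The inclusion of the chains of a full subcomplex into the chains of `K`. -/
noncomputable def chainIncl (K : SComplex V) (I : Finset V) (n : ℤ) :
    (K.full I).chainZ n →ₗ[ℤ] K.chainZ n :=
  Finsupp.lsum ℤ fun σ => LinearMap.toSpanSingleton ℤ _ (Finsupp.single ⟨σ.1, σ.2.1.1, σ.2.2⟩ 1)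

/-- Restriction of cochains of `K` to cochains of a full subcomplex. -/
noncomputable def cochainRestrict (K : SComplex V) (I : Finset V) (n : ℤ) :
    (K.chainZ n →ₗ[ℤ] ℤ) →ₗ[ℤ] ((K.full I).chainZ n →ₗ[ℤ] ℤ) :=
  LinearMap.lcomp ℤ ℤ (K.chainIncl I n)

/-- The oriented edge chain corresponding to an edge `{a, b}` (oriented from `a` to `b`). -/
noncomputable def edgeChain (K : SComplex V) (a b : V) (hab : a ≠ b)
    (h : ({a, b} : Finset V) ∈ K.faces) : K.chainZ 1 :=
  (if a ≤ b then (1 : ℤ) else -1) •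
    Finsupp.single ⟨{a, b}, h, by
      rw [Finset.card_insert_of_notMem (by simp [hab]), Finset.card_singleton]; norm_num⟩ 1

end SComplex

end Paper

/-- The eighteen maximal 3-simplices of the polytopal 3-sphere from Construction 3.1. -/
def tetraList : Finset (Finset ℕ) :=
  {{1,2,4,5},{1,2,4,6},{1,2,5,7},{1,2,6,7},{1,3,5,7},{1,3,6,7},{2,3,4,7},{2,3,6,7},
   {2,4,5,7},{3,4,5,7},{1,4,5,8},{1,4,6,8},{1,3,5,8},{1,3,6,8},{2,3,4,8},{2,3,6,8},
   {2,4,6,8},{3,4,5,8}}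

/-- The polytopal 3-sphere `K` of Construction 3.1, on vertex set `{1, ..., 8}`. -/
def Kpaper : Paper.SComplex ℕ where
  vertexSet := {1,2,3,4,5,6,7,8}
  faces := {s | ∃ t ∈ tetraList, s ⊆ t}
  empty_mem := ⟨{1,2,4,5}, by decide, by simp⟩
  face_sub := by
    rintro s ⟨t, ht, hst⟩
    have h : ∀ t ∈ tetraList, t ⊆ ({1,2,3,4,5,6,7,8} : Finset ℕ) := by decide
    exact hst.trans (h t ht)
  down_closed := by
    rintro s u ⟨t, ht, hst⟩ hus
    exact ⟨t, ht, hus.trans hst⟩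

section Helpers

open Paper Paper.SComplex

variable {V : Type*} [DecidableEq V] [LinearOrder V]

lemma single_sub_congr {P : Finset V → Prop} {x y : Finset V} (h : x = y) (p : P x) (q : P y)
    (c : ℤ) : (Finsupp.single ⟨x, p⟩ c : {s // P s} →₀ ℤ) = Finsupp.single ⟨y, q⟩ c := by
  subst h; rfl

lemma chainCast_single (L : SComplex V) {m n : ℤ} (h : m = n)
    (σ : {σ : Finset V // σ ∈ L.faces ∧ (σ.card : ℤ) = m + 1}) (c : ℤ) :
    L.chainCast h (Finsupp.single σ c) =
      Finsupp.single ⟨σ.1, σ.2.1, by rw [σ.2.2, h]⟩ c := by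
  subst h; rfl

lemma chainCast_symm (L : SComplex V) {m n : ℤ} (h : m = n) :
    (L.chainCast h).symm = L.chainCast h.symm := by subst h; rfl

lemma bdry_single (L : SComplex V) (n : ℤ)
    (σ : {σ : Finset V // σ ∈ L.faces ∧ (σ.card : ℤ) = n + 1}) (c : ℤ) :
    L.bdry n (Finsupp.single σ c) = c • L.bdryElem n σ := by
  simp [SComplex.bdry]

lemma sum_fin_cast {M : Type*} [AddCommMonoid M] {n m : ℕ} (h : n = m) (f : Fin n → M) :
    (∑ i, f i) = ∑ i : Fin m, f (Fin.cast h.symm i) := by subst h; rfl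

lemma sort_pair' {a b : V} (hab : a < b) :
    ({a, b} : Finset V).sort (· ≤ ·) = [a, b] := by
  have h1 : ∀ c ∈ ({b} : Finset V), a ≤ c := by
    intro c hc; rw [Finset.mem_singleton] at hc; subst hc; exact hab.le
  have h2 : a ∉ ({b} : Finset V) := by simp [hab.ne]
  rw [Finset.sort_insert (r := (· ≤ ·)) h1 h2, Finset.sort_singleton]

lemma bdryElem_card_one (L : SComplex V) (n : ℤ)
    (σ : {σ : Finset V // σ ∈ L.faces ∧ (σ.card : ℤ) = n + 1}) (a : V) (hσ : σ.1 = {a}) :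
    L.bdryElem n σ = Finsupp.single
      ⟨∅, L.empty_mem, by have := σ.2.2; rw [hσ] at this; simp at this ⊢; omega⟩ 1 := by
  have hc : σ.1.card = 1 := by rw [hσ]; simp
  rw [SComplex.bdryElem, sum_fin_cast hc, Fin.sum_univ_one]
  have hsort : σ.1.sort (· ≤ ·) = [a] := by rw [hσ, Finset.sort_singleton]
  simp only [Fin.coe_cast, Fin.val_zero, pow_zero, one_smul, List.get_eq_getElem, hsort,
    List.getElem_cons_zero]
  exact single_sub_congr (by rw [hσ]; simp) _ _ 1

lemma bdryElem_pair (L : SComplex V) (n : ℤ)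
    (σ : {σ : Finset V // σ ∈ L.faces ∧ (σ.card : ℤ) = n + 1}) (a b : V) (hab : a < b)
    (hσ : σ.1 = {a, b}) :
    L.bdryElem n σ =
      Finsupp.single ⟨{b}, L.down_closed σ.2.1 (by rw [hσ]; intro x hx; simp at hx ⊢; tauto),
        by have := σ.2.2; rw [hσ, Finset.card_insert_of_notMem (by simp [hab.ne]),
             Finset.card_singleton] at this; simp; omega⟩ 1 -
      Finsupp.single ⟨{a}, L.down_closed σ.2.1 (by rw [hσ]; intro x hx; simp at hx ⊢; tauto),
        by have := σ.2.2; rw [hσ, Finset.card_insert_of_notMem (by simp [hab.ne]),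
             Finset.card_singleton] at this; simp; omega⟩ 1 := by
  have hc : σ.1.card = 2 := by
    rw [hσ, Finset.card_insert_of_notMem (by simp [hab.ne]), Finset.card_singleton]
  rw [SComplex.bdryElem, sum_fin_cast hc, Fin.sum_univ_two]
  have hsort : σ.1.sort (· ≤ ·) = [a, b] := by rw [hσ]; exact sort_pair' hab
  simp only [Fin.coe_cast, Fin.val_zero, Fin.val_one, pow_zero, pow_one, one_smul, neg_smul,
    List.get_eq_getElem, hsort, List.getElem_cons_zero, List.getElem_cons_succ]
  simp only [← sub_eq_add_neg]
  congr 1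
  · exact single_sub_congr (by rw [hσ]; exact Finset.erase_insert (by simp [hab.ne])) _ _ 1
  · exact single_sub_congr (by rw [hσ, Finset.pair_comm, Finset.erase_insert (by simp [hab.ne'])]) _ _ 1

end Helpers

section Helpers2
open Paper Paper.SComplex
variable {V : Type*} [DecidableEq V] [LinearOrder V]

lemma cobdry_apply (L : SComplex V) (n : ℤ) (g : L.chainZ n →ₗ[ℤ] ℤ) (x : L.chainZ (n + 1)) :
    L.cobdry n g x = g (L.chainCast (show n + 1 - 1 = n by ring) (L.bdry (n + 1) x)) := rfl

end Helpers2
section Main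

open Paper Paper.SComplex

variable {V : Type*} [DecidableEq V] [LinearOrder V]

theorem cohomNE (K : SComplex V) (a b : V) (hab : a ≠ b) (ha : {a} ∈ K.faces)
    (hb : {b} ∈ K.faces) (hnI : ({a, b} : Finset V) ∉ K.faces) :
    ¬ Subsingleton ((K.full {a, b}).reducedCohomology 0) := by
  intro hss
  set L := K.full {a, b} with hL
  have haL : ({a} : Finset V) ∈ L.faces := ⟨ha, by simp⟩
  have hbL : ({b} : Finset V) ∈ L.faces := ⟨hb, by simp⟩
  set σa : {σ : Finset V // σ ∈ L.faces ∧ (σ.card : ℤ) = 0 + 1} := ⟨{a}, haL, by simp⟩ with hσa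
  set σb : {σ : Finset V // σ ∈ L.faces ∧ (σ.card : ℤ) = 0 + 1} := ⟨{b}, hbL, by simp⟩ with hσb
  set f : L.chainZ 0 →ₗ[ℤ] ℤ := Finsupp.lapply σa with hfdef
  have hempty : IsEmpty {σ : Finset V // σ ∈ L.faces ∧ (σ.card : ℤ) = 0 + 1 + 1} := by
    constructor
    rintro ⟨σ, ⟨hσK, hσI⟩, hcard⟩
    have h2 : σ.card = 2 := by exact_mod_cast hcard
    have hcI : ({a, b} : Finset V).card = 2 := by
      rw [Finset.card_insert_of_notMem (by simp [hab]), Finset.card_singleton]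
    have hσeq : σ = {a, b} := Finset.eq_of_subset_of_card_le hσI (by omega)
    exact hnI (hσeq ▸ hσK)
  have hfcoc : f ∈ L.cocycles 0 := by
    show L.cobdry 0 f = 0
    ext x
    exact (hempty.false x).elim
  have h0 : (Submodule.Quotient.mk ⟨f, hfcoc⟩ : L.reducedCohomology 0) =
      Submodule.Quotient.mk 0 := Subsingleton.elim _ _
  rw [Submodule.Quotient.eq, sub_zero] at h0
  have hf' : f ∈ L.cobdries 0 := by
    have h1 := Submodule.mem_comap.mp h0
    rw [Submodule.mem_inf] at h1
    exact h1.1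
  obtain ⟨φ, hφr, hφeq⟩ := Submodule.mem_map.mp hf'
  obtain ⟨g₀, rfl⟩ := LinearMap.mem_range.mp hφr
  have comp : ∀ (σ : {σ : Finset V // σ ∈ L.faces ∧ (σ.card : ℤ) = 0 + 1}) (x : V),
      σ.1 = {x} →
      ((LinearEquiv.arrowCongr (L.chainCast (show (0:ℤ) - 1 + 1 = 0 by ring))
        (LinearEquiv.refl ℤ ℤ)).toLinearMap (L.cobdry (0 - 1) g₀)) (Finsupp.single σ 1) =
      g₀ (Finsupp.single ⟨∅, L.empty_mem, by simp⟩ 1) := by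
    intro σ x hx
    simp only [LinearEquiv.coe_coe, LinearEquiv.arrowCongr_apply, LinearEquiv.refl_apply]
    rw [chainCast_symm, chainCast_single]
    rw [cobdry_apply, bdry_single, one_smul, bdryElem_card_one L (0 - 1 + 1) ⟨σ.1, σ.2.1, by rw [σ.2.2]; ring⟩ x hx, chainCast_single]
  have hva := comp σa a rfl
  have hvb := comp σb b rfl
  rw [hφeq] at hva hvb
  have hfin : f (Finsupp.single σa 1) = f (Finsupp.single σb 1) := by rw [hva, hvb]
  have hne : σa ≠ σb := by
    intro h
    exact hab (Finset.singleton_inj.mp (congrArg Subtype.val h))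
  rw [hfdef] at hfin
  simp only [Finsupp.lapply_apply, Finsupp.single_eq_same,
    Finsupp.single_eq_of_ne' (Ne.symm hne)] at hfin
  exact one_ne_zero hfin

end Main
section MainB

open Paper Paper.SComplex

variable {V : Type*} [DecidableEq V] [LinearOrder V]

theorem cohomE (K : SComplex V) (a b : V) (hab : a < b)
    (hIf : ({a, b} : Finset V) ∈ K.faces) :
    Subsingleton ((K.full {a, b}).reducedCohomology 0) := by
  set L := K.full {a, b} with hL
  have hIL : ({a, b} : Finset V) ∈ L.faces := ⟨hIf, subset_rfl⟩
  have hcI : ({a, b} : Finset V).card = 2 := by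
    rw [Finset.card_insert_of_notMem (by simp [hab.ne]), Finset.card_singleton]
  have haL : ({a} : Finset V) ∈ L.faces := L.down_closed hIL (by simp)
  have hbL : ({b} : Finset V) ∈ L.faces := L.down_closed hIL (by intro x hx; simp at hx ⊢; tauto)
  set σa : {σ : Finset V // σ ∈ L.faces ∧ (σ.card : ℤ) = 0 + 1} := ⟨{a}, haL, by simp⟩ with hσa
  set σb : {σ : Finset V // σ ∈ L.faces ∧ (σ.card : ℤ) = 0 + 1} := ⟨{b}, hbL, by simp⟩ with hσb
  set σI : {σ : Finset V // σ ∈ L.faces ∧ (σ.card : ℤ) = 0 + 1 + 1} :=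
    ⟨{a, b}, hIL, by rw [hcI]; ring⟩ with hσI
  have key : ∀ f ∈ L.cocycles 0, f ∈ L.cobdries 0 := by
    intro f hf
    -- the cocycle condition gives f(σb) = f(σa)
    have hz : L.cobdry 0 f (Finsupp.single σI 1) = 0 := by
      have : L.cobdry 0 f = 0 := hf
      rw [this]; rfl
    rw [cobdry_apply, bdry_single, one_smul,
      bdryElem_pair L (0 + 1) σI a b hab rfl] at hz
    rw [map_sub, map_sub, chainCast_single, chainCast_single] at hz
    have hfab : f (Finsupp.single σb 1) = f (Finsupp.single σa 1) :=
      sub_eq_zero.mp hz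
    -- construct the coboundary preimage
    set g₀ : L.chainZ (0 - 1) →ₗ[ℤ] ℤ :=
      (f (Finsupp.single σa 1)) • Finsupp.lapply ⟨∅, L.empty_mem, by simp⟩ with hg₀
    refine ⟨L.cobdry (0 - 1) g₀, LinearMap.mem_range_self _ _, ?_⟩
    apply Finsupp.lhom_ext
    intro σ c
    have hσ1 : σ.1 = {a} ∨ σ.1 = {b} := by
      have hcard : σ.1.card = 1 := by exact_mod_cast σ.2.2
      obtain ⟨x, hx⟩ := Finset.card_eq_one.mp hcard
      have hxI : x ∈ ({a, b} : Finset V) := σ.2.1.2 (by rw [hx]; exact Finset.mem_singleton_self x)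
      rcases Finset.mem_insert.mp hxI with h | h
      · left; rw [hx, h]
      · right; rw [hx, Finset.mem_singleton.mp h]
    have hsingle : Finsupp.single σ c = c • Finsupp.single σ 1 := by
      rw [Finsupp.smul_single, smul_eq_mul, mul_one]
    obtain hx | hx := hσ1
    · have hσeq : σ = σa := Subtype.ext hx
      have hfs : f (Finsupp.single σ c) = c • f (Finsupp.single σa 1) := by
        rw [hsingle, map_smul,
          show (Finsupp.single σ 1 : L.chainZ 0) = Finsupp.single σa 1 by rw [hσeq]]
      simp only [LinearEquiv.coe_coe, LinearEquiv.arrowCongr_apply, LinearEquiv.refl_apply]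
      rw [chainCast_symm, chainCast_single, cobdry_apply, bdry_single,
        bdryElem_card_one L (0 - 1 + 1) ⟨σ.1, σ.2.1, by rw [σ.2.2]; ring⟩ a hx]
      rw [map_smul, chainCast_single, map_smul, hfs]
      congr 1
      rw [hg₀]
      rw [LinearMap.smul_apply, Finsupp.lapply_apply, Finsupp.single_eq_same, smul_eq_mul, mul_one]
    · have hσeq : σ = σb := Subtype.ext hx
      have hfs : f (Finsupp.single σ c) = c • f (Finsupp.single σa 1) := by
        rw [hsingle, map_smul,
          show (Finsupp.single σ 1 : L.chainZ 0) = Finsupp.single σb 1 by rw [hσeq], hfab]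
      simp only [LinearEquiv.coe_coe, LinearEquiv.arrowCongr_apply, LinearEquiv.refl_apply]
      rw [chainCast_symm, chainCast_single, cobdry_apply, bdry_single,
        bdryElem_card_one L (0 - 1 + 1) ⟨σ.1, σ.2.1, by rw [σ.2.2]; ring⟩ b hx]
      rw [map_smul, chainCast_single, map_smul, hfs]
      congr 1
      rw [hg₀]
      rw [LinearMap.smul_apply, Finsupp.lapply_apply, Finsupp.single_eq_same, smul_eq_mul, mul_one]
  rw [show (L.reducedCohomology 0) = _ from rfl]
  rw [Submodule.Quotient.subsingleton_iff, eq_top_iff]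
  rintro ⟨x, hx⟩ -
  exact Submodule.mem_comap.mpr (Submodule.mem_inf.mpr ⟨key x hx, hx⟩)

end MainB
section Final

open Paper Paper.SComplex

theorem cohomE' {V : Type*} [DecidableEq V] [LinearOrder V] (K : SComplex V) (a b : V)
    (hab : a ≠ b) (hIf : ({a, b} : Finset V) ∈ K.faces) :
    Subsingleton ((K.full {a, b}).reducedCohomology 0) := by
  rcases lt_or_gt_of_ne hab with h | h
  · exact cohomE K a b h hIf
  · have hpc : ({a, b} : Finset V) = {b, a} := Finset.pair_comm a b
    rw [hpc]
    exact cohomE K b a h (hpc ▸ hIf)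

end Final

lemma mem_Kpaper_faces_iff (s : Finset ℕ) : s ∈ Kpaper.faces ↔ ∃ t ∈ tetraList, s ⊆ t :=
  Iff.rfl

lemma Kpaper_edges : ∀ a ∈ ({1,2,3,4,5,6,7,8} : Finset ℕ), ∀ b ∈ ({1,2,3,4,5,6,7,8} : Finset ℕ),
    a ≠ b → ({a, b} : Finset ℕ) ≠ {5, 6} → ({a, b} : Finset ℕ) ≠ {7, 8} →
    ∃ t ∈ tetraList, ({a, b} : Finset ℕ) ⊆ t := by decide

theorem stmt15 (I : Finset ℕ) (hI : I ⊆ Kpaper.vertexSet) (hcard : I.card = 2) :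
    ¬ Subsingleton ((Kpaper.full I).reducedCohomology 0) ↔ (I = {5, 6} ∨ I = {7, 8}) := by
  constructor
  · intro h
    by_contra hne
    push_neg at hne
    obtain ⟨h1, h2⟩ := hne
    apply h
    obtain ⟨a, b, hab, rfl⟩ := Finset.card_eq_two.mp hcard
    have ha : a ∈ ({1,2,3,4,5,6,7,8} : Finset ℕ) := hI (Finset.mem_insert_self a {b})
    have hb : b ∈ ({1,2,3,4,5,6,7,8} : Finset ℕ) := hI (by simp)
    exact cohomE' Kpaper a b hab
      ((mem_Kpaper_faces_iff _).mpr (Kpaper_edges a ha b hb hab h1 h2))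
  · rintro (rfl | rfl)
    · exact cohomNE Kpaper 5 6 (by norm_num)
        ((mem_Kpaper_faces_iff _).mpr (by decide)) ((mem_Kpaper_faces_iff _).mpr (by decide))
        (fun hc => by revert hc; rw [mem_Kpaper_faces_iff]; decide)
    · exact cohomNE Kpaper 7 8 (by norm_num)
        ((mem_Kpaper_faces_iff _).mpr (by decide)) ((mem_Kpaper_faces_iff _).mpr (by decide))
        (fun hc => by revert hc; rw [mem_Kpaper_faces_iff]; decide)
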